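/- arXiv:2103.04321 — 4 statements merged into one kernel-verified Lean document; each statement's English description precedes it below -/
import Mathlib

section
/- Let B₁, B₂ ⊆ S^{n-1} (n ≥ 2) be nonempty sets with P₁ := ℙ·B₁ and P₂ := ℙ·B₂ convex and open, and B₁ ∩ B₂ = ∅. Define E := {u ∈ S^{n-1} : ⟨b₁,u⟩ > 0 ∀ b₁ ∈ B₁ and ⟨b₂,u⟩ < 0 ∀ b₂ ∈ B₂}. Then ℝ₊·E := {t·u : t ≥ 0, u ∈ E} ∪ {0} is a pointed, closed, convex cone. -/
open Pointwise

-- auxiliary lemma: if the cone over B is open and u is a unit vector with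
-- ⟨b, u⟩ ≥ 0 for all b ∈ B, then in fact ⟨b, u⟩ > 0 for all b ∈ B.
lemma aux_strict {n : ℕ} {B : Set (EuclideanSpace ℝ (Fin n))}
    (ho : IsOpen {y : EuclideanSpace ℝ (Fin n) | ∃ t > (0 : ℝ), ∃ b ∈ B, y = t • b})
    {u : EuclideanSpace ℝ (Fin n)} (hu : ‖u‖ = 1)
    (h : ∀ b ∈ B, 0 ≤ (inner ℝ b u : ℝ)) {b : EuclideanSpace ℝ (Fin n)} (hb : b ∈ B) :
    0 < (inner ℝ b u : ℝ) := by
  have hbP : b ∈ {y : EuclideanSpace ℝ (Fin n) | ∃ t > (0 : ℝ), ∃ b' ∈ B, y = t • b'} :=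
    ⟨1, one_pos, b, hb, (one_smul _ _).symm⟩
  obtain ⟨ε, hε, hball⟩ := Metric.isOpen_iff.mp ho b hbP
  have hmem : b - (ε/2) • u ∈ Metric.ball b ε := by
    rw [Metric.mem_ball, dist_eq_norm]
    have : b - (b - (ε/2) • u) = (ε/2) • u := by abel
    rw [show b - (ε/2) • u - b = -((ε/2) • u) by abel, norm_neg, norm_smul, hu,
      Real.norm_eq_abs, abs_of_pos (by linarith : (0:ℝ) < ε/2), mul_one]
    linarith
  obtain ⟨s, hs, b', hb', heq⟩ := hball hmem
  have h1 : (inner ℝ (b - (ε/2) • u) u : ℝ) = s * inner ℝ b' u := by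
    rw [heq, real_inner_smul_left]
  have h2 : (inner ℝ (b - (ε/2) • u) u : ℝ) = inner ℝ b u - (ε/2) * ‖u‖^2 := by
    rw [inner_sub_left, real_inner_smul_left, real_inner_self_eq_norm_sq]
  have h3 : 0 ≤ s * (inner ℝ b' u : ℝ) := mul_nonneg hs.le (h b' hb')
  rw [hu] at h2
  nlinarith

theorem stmt_7 {n : ℕ} (hn : 2 ≤ n) (B₁ B₂ : Set (EuclideanSpace ℝ (Fin n)))
    (hB₁ : B₁ ⊆ Metric.sphere (0 : EuclideanSpace ℝ (Fin n)) 1)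
    (hB₂ : B₂ ⊆ Metric.sphere (0 : EuclideanSpace ℝ (Fin n)) 1)
    (hne₁ : B₁.Nonempty) (hne₂ : B₂.Nonempty)
    (hc₁ : Convex ℝ {y : EuclideanSpace ℝ (Fin n) | ∃ t > (0 : ℝ), ∃ b ∈ B₁, y = t • b})
    (hc₂ : Convex ℝ {y : EuclideanSpace ℝ (Fin n) | ∃ t > (0 : ℝ), ∃ b ∈ B₂, y = t • b})
    (ho₁ : IsOpen {y : EuclideanSpace ℝ (Fin n) | ∃ t > (0 : ℝ), ∃ b ∈ B₁, y = t • b})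
    (ho₂ : IsOpen {y : EuclideanSpace ℝ (Fin n) | ∃ t > (0 : ℝ), ∃ b ∈ B₂, y = t • b})
    (hdisj : B₁ ∩ B₂ = ∅)
    (E : Set (EuclideanSpace ℝ (Fin n)))
    (hE : E = {u ∈ Metric.sphere (0 : EuclideanSpace ℝ (Fin n)) 1 |
        (∀ b ∈ B₁, (inner ℝ b u : ℝ) > 0) ∧ (∀ b ∈ B₂, (inner ℝ b u : ℝ) < 0)})
    (C : Set (EuclideanSpace ℝ (Fin n)))
    (hC : C = {y : EuclideanSpace ℝ (Fin n) | ∃ t ≥ (0 : ℝ), ∃ u ∈ E, y = t • u} ∪ {0}) :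
    Convex ℝ C ∧ IsClosed C ∧ (∀ t : ℝ, 0 < t → ∀ y ∈ C, t • y ∈ C) ∧
      C ∩ (-C) = {0} := by
  -- K : closed convex cone given by weak inequalities
  set K : Set (EuclideanSpace ℝ (Fin n)) :=
    {y | (∀ b ∈ B₁, 0 ≤ (inner ℝ b y : ℝ)) ∧ (∀ b ∈ B₂, (inner ℝ b y : ℝ) ≤ 0)} with hK
  have hCK : C = K := by
    rw [hC]
    ext y
    constructor
    · rintro (⟨t, ht, u, hu, rfl⟩ | hy)
      · rw [hE] at hu
        obtain ⟨hus, hu1, hu2⟩ := hu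
        constructor
        · intro b hb
          rw [real_inner_smul_right]
          exact mul_nonneg ht (hu1 b hb).le
        · intro b hb
          rw [real_inner_smul_right]
          exact mul_nonpos_of_nonneg_of_nonpos ht (hu2 b hb).le
      · simp only [Set.mem_singleton_iff] at hy
        subst hy
        constructor <;> intro b hb <;> simp
    · rintro ⟨h1, h2⟩
      by_cases hy : y = 0
      · right; simp [hy]
      · left
        have hny : 0 < ‖y‖ := norm_pos_iff.mpr hy
        refine ⟨‖y‖, hny.le, ‖y‖⁻¹ • y, ?_, (smul_inv_smul₀ hny.ne' y).symm⟩
        have hun : ‖(‖y‖⁻¹ • y)‖ = 1 := by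
          rw [norm_smul, norm_inv, norm_norm, inv_mul_cancel₀ hny.ne']
        rw [hE]
        refine ⟨mem_sphere_zero_iff_norm.mpr hun, ?_, ?_⟩
        · intro b hb
          refine aux_strict ho₁ hun (fun b' hb' => ?_) hb
          rw [real_inner_smul_right]
          exact mul_nonneg (inv_nonneg.mpr hny.le) (h1 b' hb')
        · intro b hb
          have : 0 < (inner ℝ b (-(‖y‖⁻¹ • y)) : ℝ) := by
            refine aux_strict ho₂ (by rw [norm_neg]; exact hun) (fun b' hb' => ?_) hb
            rw [inner_neg_right, real_inner_smul_right]
            have := h2 b' hb'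
            have : (inner ℝ b' y : ℝ) ≤ 0 := this
            nlinarith [inv_nonneg.mpr hny.le, this]
          rw [inner_neg_right] at this
          linarith
  rw [hCK]
  refine ⟨?_, ?_, ?_, ?_⟩
  · -- convex
    intro x hx y hy a b ha hb hab
    constructor
    · intro c hc
      rw [inner_add_right, real_inner_smul_right, real_inner_smul_right]
      exact add_nonneg (mul_nonneg ha (hx.1 c hc)) (mul_nonneg hb (hy.1 c hc))
    · intro c hc
      rw [inner_add_right, real_inner_smul_right, real_inner_smul_right]
      exact add_nonpos (mul_nonpos_of_nonneg_of_nonpos ha (hx.2 c hc))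
        (mul_nonpos_of_nonneg_of_nonpos hb (hy.2 c hc))
  · -- closed
    have hKeq : K = (⋂ b ∈ B₁, {y : EuclideanSpace ℝ (Fin n) | 0 ≤ (inner ℝ b y : ℝ)}) ∩
        ⋂ b ∈ B₂, {y : EuclideanSpace ℝ (Fin n) | (inner ℝ b y : ℝ) ≤ 0} := by
      ext y; simp [hK]
    rw [hKeq]
    refine IsClosed.inter ?_ ?_
    · exact isClosed_biInter fun b _ =>
        isClosed_le continuous_const (Continuous.inner continuous_const continuous_id)
    · exact isClosed_biInter fun b _ =>
        isClosed_le (Continuous.inner continuous_const continuous_id) continuous_const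
  · -- scaling
    intro t ht y hy
    constructor
    · intro b hb
      rw [real_inner_smul_right]
      exact mul_nonneg ht.le (hy.1 b hb)
    · intro b hb
      rw [real_inner_smul_right]
      exact mul_nonpos_of_nonneg_of_nonpos ht.le (hy.2 b hb)
  · -- pointed
    ext y
    simp only [Set.mem_inter_iff, Set.mem_singleton_iff, Set.mem_neg]
    constructor
    · rintro ⟨hy, hny⟩
      by_contra h0
      obtain ⟨b₁, hb₁⟩ := hne₁
      -- every b ∈ B₁ satisfies inner ℝ b y = 0
      have hzero : ∀ b ∈ B₁, (inner ℝ b y : ℝ) = 0 := by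
        intro b hb
        have h1 := hy.1 b hb
        have h2 := hny.1 b hb
        rw [inner_neg_right] at h2
        linarith
      have hbP : b₁ ∈ {z : EuclideanSpace ℝ (Fin n) | ∃ t > (0 : ℝ), ∃ b ∈ B₁, z = t • b} :=
        ⟨1, one_pos, b₁, hb₁, (one_smul _ _).symm⟩
      obtain ⟨ε, hε, hball⟩ := Metric.isOpen_iff.mp ho₁ b₁ hbP
      have hny' : 0 < ‖y‖ := norm_pos_iff.mpr h0
      set δ := ε / (2 * ‖y‖) with hδ
      have hδpos : 0 < δ := by positivity
      have hmem : b₁ + δ • y ∈ Metric.ball b₁ ε := by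
        rw [Metric.mem_ball, dist_eq_norm]
        rw [show b₁ + δ • y - b₁ = δ • y by abel, norm_smul, Real.norm_eq_abs,
          abs_of_pos hδpos]
        have hδy : δ * ‖y‖ = ε / 2 := by
          rw [hδ]; field_simp
        rw [hδy]; linarith
      obtain ⟨s, hs, b', hb', heq⟩ := hball hmem
      have e1 : (inner ℝ (b₁ + δ • y) y : ℝ) = s * inner ℝ b' y := by
        rw [heq, real_inner_smul_left]
      rw [inner_add_left, real_inner_smul_left, hzero b₁ hb₁, hzero b' hb',
        real_inner_self_eq_norm_sq] at e1
      have hpos : 0 < δ * ‖y‖^2 := by positivity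
      rw [zero_add, mul_zero] at e1
      linarith
    · rintro rfl
      have : (0 : EuclideanSpace ℝ (Fin n)) ∈ K := by
        constructor <;> intro b hb <;> simp
      exact ⟨this, by simpa using this⟩
end

section
/- Let C₁, C₂ ⊆ ℝⁿ be nonempty compact convex sets with 0 ∉ C₁ ∪ C₂ and (ℙ·C₁) ∩ (ℙ·C₂) = ∅. Then there exists r > 0 such that [ℙ·(C₁ + rU)] ∩ [ℙ·(C₂ + rU)] = ∅, where U is the closed unit ball and ℙ·A := {t·a : t > 0, a ∈ A}. -/
open Pointwise

-- Auxiliary: continuity-style estimate for normalization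
lemma norm_smul_sub_est {E : Type*} [NormedAddCommGroup E] [NormedSpace ℝ E]
    (x y : E) (hx : x ≠ 0) (hy : y ≠ 0) :
    ‖‖x‖⁻¹ • x - ‖y‖⁻¹ • y‖ ≤ 2 * ‖x - y‖ / ‖x‖ := by
  have hxn : (0:ℝ) < ‖x‖ := norm_pos_iff.mpr hx
  have hyn : (0:ℝ) < ‖y‖ := norm_pos_iff.mpr hy
  have key : ‖x‖⁻¹ • x - ‖y‖⁻¹ • y = ‖x‖⁻¹ • (x - y) + (‖x‖⁻¹ - ‖y‖⁻¹) • y := by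
    rw [smul_sub, sub_smul]; abel
  rw [key]
  have h1 : ‖‖x‖⁻¹ • (x - y)‖ = ‖x - y‖ / ‖x‖ := by
    rw [norm_smul, norm_inv, norm_norm, div_eq_inv_mul]
  have h2 : ‖(‖x‖⁻¹ - ‖y‖⁻¹) • y‖ ≤ ‖x - y‖ / ‖x‖ := by
    rw [norm_smul, Real.norm_eq_abs]
    have : ‖x‖⁻¹ - ‖y‖⁻¹ = (‖y‖ - ‖x‖) / (‖x‖ * ‖y‖) := by
      field_simp
    rw [this, abs_div, abs_of_pos (mul_pos hxn hyn)]
    have hb : |‖y‖ - ‖x‖| ≤ ‖x - y‖ := by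
      rw [abs_sub_comm]; exact abs_norm_sub_norm_le x y
    calc |‖y‖ - ‖x‖| / (‖x‖ * ‖y‖) * ‖y‖ = |‖y‖ - ‖x‖| / ‖x‖ := by
          field_simp
      _ ≤ ‖x - y‖ / ‖x‖ := by gcongr
  calc ‖‖x‖⁻¹ • (x - y) + (‖x‖⁻¹ - ‖y‖⁻¹) • y‖
      ≤ ‖‖x‖⁻¹ • (x - y)‖ + ‖(‖x‖⁻¹ - ‖y‖⁻¹) • y‖ := norm_add_le _ _
    _ ≤ ‖x - y‖ / ‖x‖ + ‖x - y‖ / ‖x‖ := by rw [h1]; gcongr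
    _ = 2 * ‖x - y‖ / ‖x‖ := by ring

theorem stmt_10 {n : ℕ} (C₁ C₂ : Set (EuclideanSpace ℝ (Fin n)))
    (hne₁ : C₁.Nonempty) (hne₂ : C₂.Nonempty)
    (hcp₁ : IsCompact C₁) (hcp₂ : IsCompact C₂)
    (hcv₁ : Convex ℝ C₁) (hcv₂ : Convex ℝ C₂)
    (h0 : (0 : EuclideanSpace ℝ (Fin n)) ∉ C₁ ∪ C₂)
    (hdisj : {y : EuclideanSpace ℝ (Fin n) | ∃ t > (0 : ℝ), ∃ c ∈ C₁, y = t • c} ∩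
             {y : EuclideanSpace ℝ (Fin n) | ∃ t > (0 : ℝ), ∃ c ∈ C₂, y = t • c} = ∅) :
    ∃ r > (0 : ℝ),
      {y : EuclideanSpace ℝ (Fin n) | ∃ t > (0 : ℝ),
          ∃ a ∈ C₁ + r • Metric.closedBall (0 : EuclideanSpace ℝ (Fin n)) 1, y = t • a} ∩
      {y : EuclideanSpace ℝ (Fin n) | ∃ t > (0 : ℝ),
          ∃ a ∈ C₂ + r • Metric.closedBall (0 : EuclideanSpace ℝ (Fin n)) 1, y = t • a} = ∅ := by
  classical
  -- minimum norms on C₁ and C₂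
  have h01 : (0 : EuclideanSpace ℝ (Fin n)) ∉ C₁ := fun h => h0 (Or.inl h)
  have h02 : (0 : EuclideanSpace ℝ (Fin n)) ∉ C₂ := fun h => h0 (Or.inr h)
  obtain ⟨c₁m, hc₁m, hmin₁⟩ := hcp₁.exists_isMinOn hne₁ continuous_norm.continuousOn
  obtain ⟨c₂m, hc₂m, hmin₂⟩ := hcp₂.exists_isMinOn hne₂ continuous_norm.continuousOn
  set m₁ : ℝ := ‖c₁m‖ with hm₁def
  set m₂ : ℝ := ‖c₂m‖ with hm₂def
  have hm₁ : 0 < m₁ := norm_pos_iff.mpr (fun h => h01 (h ▸ hc₁m))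
  have hm₂ : 0 < m₂ := norm_pos_iff.mpr (fun h => h02 (h ▸ hc₂m))
  have hlb₁ : ∀ c ∈ C₁, m₁ ≤ ‖c‖ := fun c hc => hmin₁ hc
  have hlb₂ : ∀ c ∈ C₂, m₂ ≤ ‖c‖ := fun c hc => hmin₂ hc
  -- normalized sets
  set f : EuclideanSpace ℝ (Fin n) → EuclideanSpace ℝ (Fin n) := fun x => ‖x‖⁻¹ • x with hf
  set S₁ := f '' C₁ with hS₁
  set S₂ := f '' C₂ with hS₂
  have hfc : ∀ (C : Set (EuclideanSpace ℝ (Fin n))), (0 : EuclideanSpace ℝ (Fin n)) ∉ C →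
      ContinuousOn f C := by
    intro C hC
    apply ContinuousOn.smul (f := fun x => ‖x‖⁻¹) (g := id)
    · exact (continuous_norm.continuousOn).inv₀ (fun x hx => norm_ne_zero_iff.mpr
        (fun h => hC (h ▸ hx)))
    · exact continuous_id.continuousOn
  have hcpS₁ : IsCompact S₁ := hcp₁.image_of_continuousOn (hfc C₁ h01)
  have hcpS₂ : IsCompact S₂ := hcp₂.image_of_continuousOn (hfc C₂ h02)
  -- disjointness of S₁ and S₂
  have hSdisj : Disjoint S₁ S₂ := by
    rw [Set.disjoint_left]
    rintro x ⟨c₁, hc₁, rfl⟩ ⟨c₂, hc₂, hfc₂⟩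
    have hn₁ : (0:ℝ) < ‖c₁‖ := lt_of_lt_of_le hm₁ (hlb₁ _ hc₁)
    have hn₂ : (0:ℝ) < ‖c₂‖ := lt_of_lt_of_le hm₂ (hlb₂ _ hc₂)
    have : f c₁ ∈ ({y : EuclideanSpace ℝ (Fin n) | ∃ t > (0 : ℝ), ∃ c ∈ C₁, y = t • c} ∩
        {y : EuclideanSpace ℝ (Fin n) | ∃ t > (0 : ℝ), ∃ c ∈ C₂, y = t • c}) := by
      constructor
      · exact ⟨‖c₁‖⁻¹, inv_pos.mpr hn₁, c₁, hc₁, rfl⟩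
      · exact ⟨‖c₂‖⁻¹, inv_pos.mpr hn₂, c₂, hc₂, hfc₂.symm⟩
    rw [hdisj] at this
    exact this
  -- separation δ
  obtain ⟨δ, hδ, hthick⟩ := hSdisj.exists_thickenings hcpS₁ hcpS₂.isClosed
  have hsep : ∀ x ∈ S₁, ∀ y ∈ S₂, δ ≤ dist x y := by
    intro x hx y hy
    by_contra h
    push_neg at h
    have hy1 : y ∈ Metric.thickening δ S₁ :=
      Metric.mem_thickening_iff.mpr ⟨x, hx, by rwa [dist_comm]⟩
    have hy2 : y ∈ Metric.thickening δ S₂ := Metric.self_subset_thickening hδ S₂ hy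
    exact Set.disjoint_left.mp hthick hy1 hy2
  -- choose r
  set m := min m₁ m₂ with hm
  have hm0 : 0 < m := lt_min hm₁ hm₂
  set r := min (m / 2) (δ * m / 16) with hr
  have hr0 : 0 < r := lt_min (by positivity) (by positivity)
  refine ⟨r, hr0, ?_⟩
  have hest : ∀ (C : Set (EuclideanSpace ℝ (Fin n))), (∀ c ∈ C, m ≤ ‖c‖) →
      ∀ a, (a ∈ C + r • Metric.closedBall (0 : EuclideanSpace ℝ (Fin n)) 1) →
      a ≠ 0 ∧ ∃ c ∈ C, ‖f a - f c‖ ≤ δ / 4 := by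
    intro C hC a ha
    obtain ⟨c, hc, b, hb, rfl⟩ := ha
    obtain ⟨u, hu, rfl⟩ := hb
    have hub : ‖u‖ ≤ 1 := by simpa using hu
    have hbn : ‖r • u‖ ≤ r := by
      rw [norm_smul, Real.norm_eq_abs, abs_of_pos hr0]
      nlinarith
    have hrm : r ≤ m / 2 := min_le_left _ _
    have hcn : m ≤ ‖c‖ := hC c hc
    have han : m / 2 ≤ ‖c + r • u‖ := by
      have h' : ‖c‖ ≤ ‖c + r • u‖ + ‖r • u‖ := by
        calc ‖c‖ = ‖(c + r • u) - r • u‖ := by rw [add_sub_cancel_right]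
          _ ≤ ‖c + r • u‖ + ‖r • u‖ := norm_sub_le _ _
      nlinarith
    have hane : c + r • u ≠ 0 := by
      intro h
      rw [h, norm_zero] at han
      nlinarith
    have hcne : c ≠ 0 := by
      intro h; rw [h, norm_zero] at hcn; nlinarith
    refine ⟨hane, c, hc, ?_⟩
    have := norm_smul_sub_est (c + r • u) c hane hcne
    have hd : ‖c + r • u - c‖ ≤ r := by simpa using hbn
    have hrδ : r ≤ δ * m / 16 := min_le_right _ _
    calc ‖f (c + r • u) - f c‖ ≤ 2 * ‖c + r • u - c‖ / ‖c + r • u‖ := this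
      _ ≤ 2 * r / (m / 2) := by
          apply div_le_div₀ (by positivity) (by nlinarith) (by positivity) han
      _ ≤ δ / 4 := by
          rw [div_le_div_iff₀ (by positivity) (by norm_num)]
          nlinarith
  have hC₁m : ∀ c ∈ C₁, m ≤ ‖c‖ := fun c hc => le_trans (min_le_left _ _) (hlb₁ c hc)
  have hC₂m : ∀ c ∈ C₂, m ≤ ‖c‖ := fun c hc => le_trans (min_le_right _ _) (hlb₂ c hc)
  -- final contradiction
  rw [Set.eq_empty_iff_forall_notMem]
  rintro y ⟨⟨t₁, ht₁, a₁, ha₁, hy₁⟩, ⟨t₂, ht₂, a₂, ha₂, hy₂⟩⟩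
  obtain ⟨ha₁ne, c₁, hc₁, he₁⟩ := hest C₁ hC₁m a₁ ha₁
  obtain ⟨ha₂ne, c₂, hc₂, he₂⟩ := hest C₂ hC₂m a₂ ha₂
  -- normalizations of a₁ and a₂ agree
  have hfa : f a₁ = f a₂ := by
    have h1 : f y = f a₁ := by
      rw [hy₁, hf]
      simp only
      rw [norm_smul, Real.norm_eq_abs, abs_of_pos ht₁, mul_inv, smul_smul]
      congr 1
      rw [mul_right_comm, inv_mul_cancel₀ (ne_of_gt ht₁), one_mul]
    have h2 : f y = f a₂ := by
      rw [hy₂, hf]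
      simp only
      rw [norm_smul, Real.norm_eq_abs, abs_of_pos ht₂, mul_inv, smul_smul]
      congr 1
      rw [mul_right_comm, inv_mul_cancel₀ (ne_of_gt ht₂), one_mul]
    rw [← h1, h2]
  have hs₁ : f c₁ ∈ S₁ := ⟨c₁, hc₁, rfl⟩
  have hs₂ : f c₂ ∈ S₂ := ⟨c₂, hc₂, rfl⟩
  have hdd : δ ≤ dist (f c₁) (f c₂) := hsep _ hs₁ _ hs₂
  have : dist (f c₁) (f c₂) ≤ δ / 4 + δ / 4 := by
    calc dist (f c₁) (f c₂) ≤ dist (f c₁) (f a₁) + dist (f a₁) (f c₂) := dist_triangle _ _ _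
      _ = dist (f c₁) (f a₁) + dist (f a₂) (f c₂) := by rw [hfa]
      _ ≤ δ / 4 + δ / 4 := by
          rw [dist_eq_norm, dist_eq_norm, norm_sub_rev (f c₁)]
          exact add_le_add he₁ he₂
  linarith
end

section
/- Let B ⊆ S^{n-1} be a nonempty closed set such that ℙ·B is convex. Then C := conv(B) is compact, 0 ∉ C, and ℙ·B = ℙ·C. -/
open Pointwise
open Module in
lemma aux_compact_convexHull {E : Type} [NormedAddCommGroup E] [NormedSpace ℝ E]
    [FiniteDimensional ℝ E] {B : Set E} (hB : IsCompact B) (hne : B.Nonempty) :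
    IsCompact (convexHull ℝ B) := by
  classical
  obtain ⟨b₀, hb₀⟩ := hne
  set m := finrank ℝ E + 1 with hm
  set f : (Fin m → ℝ) × (Fin m → E) → E := fun p => ∑ i, p.1 i • p.2 i with hf
  have hcont : Continuous f := by
    apply continuous_finset_sum
    intro i _
    exact ((continuous_apply i).comp continuous_fst).smul
      ((continuous_apply i).comp continuous_snd)
  have hScpt : IsCompact ((stdSimplex ℝ (Fin m)) ×ˢ (Set.univ.pi fun _ : Fin m => B)) :=
    (isCompact_stdSimplex (𝕜 := ℝ) (ι := Fin m)).prod (isCompact_univ_pi fun _ => hB)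
  have himg : f '' ((stdSimplex ℝ (Fin m)) ×ˢ (Set.univ.pi fun _ : Fin m => B))
      = convexHull ℝ B := by
    apply Set.Subset.antisymm
    · rintro x ⟨⟨w, z⟩, ⟨⟨hw0, hw1⟩, hz⟩, rfl⟩
      exact mem_convexHull_of_exists_fintype w z hw0 hw1 (fun i => hz i trivial) rfl
    · intro x hx
      obtain ⟨ι, hι, z, w, hrange, hindep, hw0, hw1, hsum⟩ :=
        eq_pos_convex_span_of_mem_convexHull hx
      have hcard : Fintype.card ι ≤ m := by
        refine le_trans hindep.card_le_finrank_succ ?_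
        exact Nat.add_le_add_right (Submodule.finrank_le _) 1
      obtain ⟨g⟩ : Nonempty (ι ↪ Fin m) := Function.Embedding.nonempty_of_card_le (by simpa)
      set w' : Fin m → ℝ := fun j => if h : ∃ i, g i = j then w h.choose else 0 with hw'
      set z' : Fin m → E := fun j => if h : ∃ i, g i = j then z h.choose else b₀ with hz'
      have key : ∀ {M : Type} [AddCommMonoid M] (F : ℝ → E → M) (hF : F 0 b₀ = 0),
          ∑ j, F (w' j) (z' j) = ∑ i, F (w i) (z i) := by
        intro M _ F hF
        rw [← Finset.sum_subset (Finset.subset_univ (Finset.univ.image g))]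
        · rw [Finset.sum_image (fun a _ b _ h => g.injective h)]
          apply Finset.sum_congr rfl
          intro i _
          have h : ∃ i', g i' = g i := ⟨i, rfl⟩
          have : h.choose = i := g.injective h.choose_spec
          simp [hw', hz', dif_pos h, this]
        · intro j _ hj
          have h : ¬ ∃ i, g i = j := by
            intro ⟨i, hi⟩
            exact hj (Finset.mem_image.2 ⟨i, Finset.mem_univ i, hi⟩)
          simp [hw', hz', dif_neg h, hF]
      refine ⟨⟨w', z'⟩, ⟨⟨?_, ?_⟩, ?_⟩, ?_⟩
      · intro j
        by_cases h : ∃ i, g i = j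
        · simp only [hw', dif_pos h]; exact (hw0 _).le
        · simp [hw', dif_neg h]
      · exact (key (M := ℝ) (fun a _ => a) rfl).trans hw1
      · intro j _
        by_cases h : ∃ i, g i = j
        · simp only [hz', dif_pos h]; exact hrange ⟨_, rfl⟩
        · simpa [hz', dif_neg h] using hb₀
      · exact (key (M := E) (fun a b => a • b) (by simp)).trans hsum
  rw [← himg]
  exact hScpt.image hcont

theorem stmt_11 {n : ℕ} (hn : 2 ≤ n) (B : Set (EuclideanSpace ℝ (Fin n)))
    (hB : B ⊆ Metric.sphere (0 : EuclideanSpace ℝ (Fin n)) 1)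
    (hne : B.Nonempty) (hcl : IsClosed B)
    (hcv : Convex ℝ {y : EuclideanSpace ℝ (Fin n) | ∃ t > (0 : ℝ), ∃ b ∈ B, y = t • b}) :
    IsCompact (convexHull ℝ B) ∧ (0 : EuclideanSpace ℝ (Fin n)) ∉ convexHull ℝ B ∧
    {y : EuclideanSpace ℝ (Fin n) | ∃ t > (0 : ℝ), ∃ b ∈ B, y = t • b} =
      {y : EuclideanSpace ℝ (Fin n) | ∃ t > (0 : ℝ), ∃ c ∈ convexHull ℝ B, y = t • c} := by
  set K := {y : EuclideanSpace ℝ (Fin n) | ∃ t > (0 : ℝ), ∃ b ∈ B, y = t • b} with hK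
  have hBK : B ⊆ K := fun b hb => ⟨1, one_pos, b, hb, (one_smul ℝ b).symm⟩
  have hsub : convexHull ℝ B ⊆ K := convexHull_min hBK hcv
  have hKne : (0 : EuclideanSpace ℝ (Fin n)) ∉ K := by
    rintro ⟨t, ht, b, hb, h⟩
    have hb1 : ‖b‖ = 1 := by simpa using hB hb
    have : ‖(0 : EuclideanSpace ℝ (Fin n))‖ = ‖t • b‖ := by rw [h]
    rw [norm_zero, norm_smul, hb1, mul_one, Real.norm_eq_abs] at this
    exact ht.ne (by linarith [abs_nonneg t, le_abs_self t, this.symm])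
  have hBcpt : IsCompact B :=
    (isCompact_sphere (0 : EuclideanSpace ℝ (Fin n)) 1).of_isClosed_subset hcl hB
  refine ⟨aux_compact_convexHull hBcpt hne, fun h => hKne (hsub h), ?_⟩
  ext y
  constructor
  · rintro ⟨t, ht, b, hb, rfl⟩
    exact ⟨t, ht, b, subset_convexHull ℝ B hb, rfl⟩
  · rintro ⟨t, ht, c, hc, rfl⟩
    obtain ⟨s, hs, b, hb, rfl⟩ := hsub hc
    exact ⟨t * s, mul_pos ht hs, b, hb, (mul_smul t s b).symm⟩
end

section
/- Let B₁, B₂ ⊆ S^{n-1} (n ≥ 2) be nonempty closed disjoint sets such that ℙ·B₁ and ℙ·B₂ are convex. Then the set E := {u ∈ S^{n-1} : ⟨b₁,u⟩ > 0 ∀ b₁ ∈ B₁, ⟨b₂,u⟩ < 0 ∀ b₂ ∈ B₂} is nonempty, open in S^{n-1}, and spherically convex (ℙ·E is convex). -/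
open Pointwise

private lemma padSum17 {M : Type*} [AddCommMonoid M] {k m : ℕ} (hk : k ≤ m) (g : Fin k → M) :
    ∑ i : Fin m, (if h : (i : ℕ) < k then g ⟨i, h⟩ else 0) = ∑ j : Fin k, g j := by
  rw [Fin.sum_univ_eq_sum_range (fun i => if h : i < k then g ⟨i, h⟩ else 0) m]
  rw [← Finset.sum_subset (Finset.range_subset_range.2 hk)
    (fun i _ hi => dif_neg (by simpa using hi))]
  rw [← Fin.sum_univ_eq_sum_range (fun i => if h : i < k then g ⟨i, h⟩ else 0) k]
  exact Finset.sum_congr rfl fun j _ => by simp [j.isLt]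

private lemma compactHull17 {n : ℕ} {s : Set (EuclideanSpace ℝ (Fin n))}
    (hs : IsCompact s) (hne : s.Nonempty) : IsCompact (convexHull ℝ s) := by
  obtain ⟨s₀, hs₀⟩ := hne
  set m := n + 1 with hm
  set D := stdSimplex ℝ (Fin m) ×ˢ (Set.univ.pi fun _ : Fin m => s) with hD
  have hDc : IsCompact D := IsCompact.prod (isCompact_stdSimplex _ _) (isCompact_univ_pi fun _ => hs)
  set F : (Fin m → ℝ) × (Fin m → EuclideanSpace ℝ (Fin n)) → EuclideanSpace ℝ (Fin n) :=
    fun p => ∑ i, p.1 i • p.2 i with hF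
  have hFc : Continuous F := continuous_finset_sum _ fun i _ =>
    ((continuous_apply i).comp continuous_fst).smul ((continuous_apply i).comp continuous_snd)
  have himg : convexHull ℝ s = F '' D := by
    apply Set.Subset.antisymm
    · intro x hx
      rw [convexHull_eq_union] at hx
      simp only [Set.mem_iUnion] at hx
      obtain ⟨t, hts, hai, hxt⟩ := hx
      have hk : t.card ≤ m := by
        have h1 := hai.card_le_finrank_succ
        rw [Fintype.card_coe] at h1
        have h2 := Submodule.finrank_le
          (vectorSpan ℝ (Set.range ((↑) : t → EuclideanSpace ℝ (Fin n))))
        rw [finrank_euclideanSpace_fin] at h2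
        omega
      rw [Finset.convexHull_eq] at hxt
      obtain ⟨w, hw0, hw1, hwx⟩ := hxt
      rw [Finset.centerMass_eq_of_sum_1 _ _ hw1] at hwx
      set k := t.card with hkdef
      set e : Fin k ≃ {x // x ∈ t} := t.equivFin.symm with he
      refine ⟨(fun i => if h : (i : ℕ) < k then w (e ⟨i, h⟩) else 0,
               fun i => if h : (i : ℕ) < k then ((e ⟨i, h⟩ : {x // x ∈ t}) : EuclideanSpace ℝ (Fin n)) else s₀),
              ⟨⟨?_, ?_⟩, ?_⟩, ?_⟩
      · intro i
        dsimp only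
        split
        · exact hw0 _ (e _).2
        · exact le_refl 0
      · rw [padSum17 hk (fun j => w (e j))]
        rw [Equiv.sum_comp e (fun a : {x // x ∈ t} => w a)]
        rw [Finset.sum_coe_sort t w]
        exact hw1
      · intro i _
        dsimp only
        split
        · exact hts (e _).2
        · exact hs₀
      · simp only [hF]
        have step : ∀ i : Fin m,
            (if h : (i : ℕ) < k then w (e ⟨i, h⟩) else 0) •
              (if h : (i : ℕ) < k then ((e ⟨i, h⟩ : {x // x ∈ t}) : EuclideanSpace ℝ (Fin n)) else s₀)
            = if h : (i : ℕ) < k then w (e ⟨i, h⟩) • ((e ⟨i, h⟩ : {x // x ∈ t}) : EuclideanSpace ℝ (Fin n)) else 0 := by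
          intro i
          split
          · rfl
          · simp
        rw [Finset.sum_congr rfl fun i _ => step i]
        rw [padSum17 hk (fun j => w (e j) • ((e j : {x // x ∈ t}) : EuclideanSpace ℝ (Fin n)))]
        rw [Equiv.sum_comp e (fun a : {x // x ∈ t} => w a • (a : EuclideanSpace ℝ (Fin n)))]
        rw [Finset.sum_coe_sort t (fun y => w y • y)]
        rw [← hwx]
        simp
    · rintro x ⟨⟨w, z⟩, ⟨⟨hw0, hw1⟩, hz⟩, rfl⟩
      exact (convex_convexHull ℝ s).sum_mem (fun i _ => hw0 i) hw1
        (fun i _ => subset_convexHull ℝ s (hz i (Set.mem_univ i)))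
  rw [himg]
  exact hDc.image hFc

private lemma coneClosed17 {n : ℕ} (B : Set (EuclideanSpace ℝ (Fin n)))
    (hB : B ⊆ Metric.sphere (0 : EuclideanSpace ℝ (Fin n)) 1) (hne : B.Nonempty)
    (hcl : IsClosed B) :
    IsClosed ({y : EuclideanSpace ℝ (Fin n) | ∃ t > (0 : ℝ), ∃ b ∈ B, y = t • b} ∪ {0}) := by
  set C := {y : EuclideanSpace ℝ (Fin n) | ∃ t > (0 : ℝ), ∃ b ∈ B, y = t • b} with hC
  have hBc : IsCompact B := (isCompact_sphere 0 1).of_isClosed_subset hcl hB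
  refine isClosed_of_closure_subset ?_
  intro x hxcl
  set M : ℝ := ‖x‖ + 1 with hM
  have hxball : x ∈ Metric.ball (0 : EuclideanSpace ℝ (Fin n)) M := by
    simp [hM]
  have h1 : x ∈ closure (Metric.ball (0 : EuclideanSpace ℝ (Fin n)) M ∩ (C ∪ {0})) :=
    Metric.isOpen_ball.inter_closure ⟨hxball, hxcl⟩
  set K := (fun p : ℝ × EuclideanSpace ℝ (Fin n) => p.1 • p.2) '' (Set.Icc (0:ℝ) M ×ˢ B) with hK
  have hKc : IsCompact K :=
    (isCompact_Icc.prod hBc).image (continuous_fst.smul continuous_snd)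
  have hsub : Metric.ball (0 : EuclideanSpace ℝ (Fin n)) M ∩ (C ∪ {0}) ⊆ K := by
    rintro y ⟨hyb, hy⟩
    rcases hy with ⟨t, ht, b, hb, rfl⟩ | hy
    · have hbn : ‖b‖ = 1 := by simpa using hB hb
      have hn : ‖t • b‖ = t := by
        rw [norm_smul, hbn, mul_one, Real.norm_eq_abs, abs_of_pos ht]
      have htM : t < M := by
        rw [← hn]; simpa [dist_eq_norm] using hyb
      exact ⟨(t, b), ⟨⟨le_of_lt ht, le_of_lt htM⟩, hb⟩, rfl⟩
    · obtain ⟨b, hb⟩ := hne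
      have hM0 : (0:ℝ) ∈ Set.Icc (0:ℝ) M := ⟨le_refl _, by positivity⟩
      refine ⟨(0, b), ⟨hM0, hb⟩, ?_⟩
      simp_all
  have hxK : x ∈ K := (hKc.isClosed.closure_subset_iff.mpr hsub) h1
  obtain ⟨⟨t, b⟩, ⟨⟨ht0, _⟩, hb⟩, rfl⟩ := hxK
  rcases eq_or_lt_of_le ht0 with h | h
  · right
    have ht' : t = 0 := h.symm
    simp [ht']
  · exact Or.inl ⟨t, h, b, hb, rfl⟩

private lemma sep17 {n : ℕ} (B₁ B₂ : Set (EuclideanSpace ℝ (Fin n)))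
    (hB₁ : B₁ ⊆ Metric.sphere (0 : EuclideanSpace ℝ (Fin n)) 1)
    (hB₂ : B₂ ⊆ Metric.sphere (0 : EuclideanSpace ℝ (Fin n)) 1)
    (hne₁ : B₁.Nonempty) (hne₂ : B₂.Nonempty)
    (hcl₁ : IsClosed B₁) (hcl₂ : IsClosed B₂)
    (hc₁ : Convex ℝ {y : EuclideanSpace ℝ (Fin n) | ∃ t > (0 : ℝ), ∃ b ∈ B₁, y = t • b})
    (hc₂ : Convex ℝ {y : EuclideanSpace ℝ (Fin n) | ∃ t > (0 : ℝ), ∃ b ∈ B₂, y = t • b})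
    (hdisj : B₁ ∩ B₂ = ∅) :
    ∃ f : EuclideanSpace ℝ (Fin n) →L[ℝ] ℝ,
      (∀ b ∈ B₁, f b < 0) ∧ (∀ b ∈ B₂, 0 ≤ f b) := by
  set C₁ := {y : EuclideanSpace ℝ (Fin n) | ∃ t > (0 : ℝ), ∃ b ∈ B₁, y = t • b} with hC₁
  set C₂ := {y : EuclideanSpace ℝ (Fin n) | ∃ t > (0 : ℝ), ∃ b ∈ B₂, y = t • b} with hC₂
  set K₁ := convexHull ℝ B₁ with hK₁
  have hB₁c : IsCompact B₁ := (isCompact_sphere 0 1).of_isClosed_subset hcl₁ hB₁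
  have hK₁c : IsCompact K₁ := compactHull17 hB₁c hne₁
  have hK₁sub : K₁ ⊆ C₁ := convexHull_min (fun b hb => ⟨1, one_pos, b, hb, (one_smul ℝ b).symm⟩) hc₁
  have hconv2 : Convex ℝ (C₂ ∪ {0}) := by
    intro x hx y hy a b ha hb hab
    rcases eq_or_lt_of_le ha with h | ha'
    · simp only [← h, zero_smul, zero_add]
      have hb1 : b = 1 := by linarith
      simpa [hb1] using hy
    rcases eq_or_lt_of_le hb with h | hb'
    · simp only [← h, zero_smul, add_zero]
      have ha1 : a = 1 := by linarith
      simpa [ha1] using hx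
    rcases hx with hx | hx
    · rcases hy with hy | hy
      · exact Or.inl (hc₂ hx hy ha hb hab)
      · obtain ⟨t, ht, c, hc, rfl⟩ := hx
        simp only [Set.mem_singleton_iff] at hy
        subst hy
        exact Or.inl ⟨a * t, by positivity, c, hc, by rw [smul_smul, smul_zero, add_zero]⟩
    · simp only [Set.mem_singleton_iff] at hx
      subst hx
      rcases hy with hy | hy
      · obtain ⟨t, ht, c, hc, rfl⟩ := hy
        exact Or.inl ⟨b * t, by positivity, c, hc, by rw [smul_smul, smul_zero, zero_add]⟩
      · simp only [Set.mem_singleton_iff] at hy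
        subst hy
        right; simp
  have hclosed2 : IsClosed (C₂ ∪ {0}) := coneClosed17 B₂ hB₂ hne₂ hcl₂
  have hdisjC : Disjoint K₁ (C₂ ∪ {0}) := by
    rw [Set.disjoint_left]
    intro x hx hx2
    have hxC₁ : x ∈ C₁ := hK₁sub hx
    obtain ⟨t, ht, b₁, hb₁, rfl⟩ := hxC₁
    have hb₁n : ‖b₁‖ = 1 := by simpa using hB₁ hb₁
    rcases hx2 with ⟨s, hs, b₂, hb₂, heq⟩ | h0
    · have hb₂n : ‖b₂‖ = 1 := by simpa using hB₂ hb₂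
      have hts : t = s := by
        have := congrArg norm heq
        rwa [norm_smul, norm_smul, hb₁n, hb₂n, mul_one, mul_one, Real.norm_eq_abs,
          Real.norm_eq_abs, abs_of_pos ht, abs_of_pos hs] at this
      subst hts
      have : b₁ = b₂ := smul_right_injective _ (ne_of_gt ht) heq
      subst this
      exact absurd (Set.mem_inter hb₁ hb₂) (by simp [hdisj])
    · simp only [Set.mem_singleton_iff] at h0
      have : ‖t • b₁‖ = t := by
        rw [norm_smul, hb₁n, mul_one, Real.norm_eq_abs, abs_of_pos ht]
      rw [h0, norm_zero] at this
      exact absurd this.symm (ne_of_gt ht)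
  obtain ⟨f, u, v, hfu, huv, hvf⟩ :=
    geometric_hahn_banach_compact_closed (convex_convexHull ℝ B₁) hK₁c hconv2 hclosed2 hdisjC
  have hv0 : v < 0 := by
    have := hvf 0 (Or.inr rfl)
    simpa using this
  refine ⟨f, ?_, ?_⟩
  · intro b hb
    have := hfu b (subset_convexHull ℝ B₁ hb)
    linarith
  · intro b hb
    by_contra h
    push_neg at h
    obtain ⟨t, ht, htv⟩ : ∃ t : ℝ, t > 0 ∧ t * f b < v := by
      refine ⟨(v - 1) / f b, ?_, ?_⟩
      · apply div_pos_of_neg_of_neg <;> linarith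
      · rw [div_mul_cancel₀ _ (ne_of_lt h)]; linarith
    have := hvf (t • b) (Or.inl ⟨t, ht, b, hb, rfl⟩)
    rw [map_smul, smul_eq_mul] at this
    linarith

theorem stmt_17 {n : ℕ} (hn : 2 ≤ n) (B₁ B₂ : Set (EuclideanSpace ℝ (Fin n)))
    (hB₁ : B₁ ⊆ Metric.sphere (0 : EuclideanSpace ℝ (Fin n)) 1)
    (hB₂ : B₂ ⊆ Metric.sphere (0 : EuclideanSpace ℝ (Fin n)) 1)
    (hne₁ : B₁.Nonempty) (hne₂ : B₂.Nonempty)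
    (hcl₁ : IsClosed B₁) (hcl₂ : IsClosed B₂)
    (hc₁ : Convex ℝ {y : EuclideanSpace ℝ (Fin n) | ∃ t > (0 : ℝ), ∃ b ∈ B₁, y = t • b})
    (hc₂ : Convex ℝ {y : EuclideanSpace ℝ (Fin n) | ∃ t > (0 : ℝ), ∃ b ∈ B₂, y = t • b})
    (hdisj : B₁ ∩ B₂ = ∅)
    (E : Set (EuclideanSpace ℝ (Fin n)))
    (hE : E = {u ∈ Metric.sphere (0 : EuclideanSpace ℝ (Fin n)) 1 |
        (∀ b ∈ B₁, (inner ℝ b u : ℝ) > 0) ∧ (∀ b ∈ B₂, (inner ℝ b u : ℝ) < 0)}) :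
    E.Nonempty ∧
    (∃ V : Set (EuclideanSpace ℝ (Fin n)), IsOpen V ∧
      E = V ∩ Metric.sphere (0 : EuclideanSpace ℝ (Fin n)) 1) ∧
    Convex ℝ {y : EuclideanSpace ℝ (Fin n) | ∃ t > (0 : ℝ), ∃ u ∈ E, y = t • u} := by
  have hB₁c : IsCompact B₁ := (isCompact_sphere 0 1).of_isClosed_subset hcl₁ hB₁
  have hB₂c : IsCompact B₂ := (isCompact_sphere 0 1).of_isClosed_subset hcl₂ hB₂
  obtain ⟨f, hf₁, hf₂⟩ := sep17 B₁ B₂ hB₁ hB₂ hne₁ hne₂ hcl₁ hcl₂ hc₁ hc₂ hdisj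
  obtain ⟨g, hg₁, hg₂⟩ := sep17 B₂ B₁ hB₂ hB₁ hne₂ hne₁ hcl₂ hcl₁ hc₂ hc₁
    (by rw [Set.inter_comm]; exact hdisj)
  set h : EuclideanSpace ℝ (Fin n) →L[ℝ] ℝ := g - f with hh
  have hh₁ : ∀ b ∈ B₁, 0 < h b := by
    intro b hb
    have h1 := hf₁ b hb
    have h2 := hg₂ b hb
    simp only [hh, ContinuousLinearMap.sub_apply]
    linarith
  have hh₂ : ∀ b ∈ B₂, h b < 0 := by
    intro b hb
    have h1 := hf₂ b hb
    have h2 := hg₁ b hb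
    simp only [hh, ContinuousLinearMap.sub_apply]
    linarith
  set w : EuclideanSpace ℝ (Fin n) := (InnerProductSpace.toDual ℝ _).symm h with hw
  have hwapp : ∀ x, (inner ℝ w x : ℝ) = h x := fun x => InnerProductSpace.toDual_symm_apply
  have hw0 : w ≠ 0 := by
    obtain ⟨b, hb⟩ := hne₁
    intro h0
    have h1 := hwapp b
    rw [h0] at h1
    simp only [inner_zero_left] at h1
    have := hh₁ b hb
    linarith
  have hwn : (0:ℝ) < ‖w‖ := norm_pos_iff.mpr hw0
  have hEmem : ∀ y : EuclideanSpace ℝ (Fin n), y ≠ 0 →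
      (∀ b ∈ B₁, (0:ℝ) < inner ℝ b y) → (∀ b ∈ B₂, (inner ℝ b y : ℝ) < 0) →
      ‖y‖⁻¹ • y ∈ E := by
    intro y hy0 hy₁ hy₂
    have hyn : (0:ℝ) < ‖y‖ := norm_pos_iff.mpr hy0
    rw [hE]
    refine ⟨?_, ?_, ?_⟩
    · simp [norm_smul, abs_of_pos (inv_pos.mpr hyn), inv_mul_cancel₀ (ne_of_gt hyn)]
    · intro b hb
      rw [real_inner_smul_right]
      exact mul_pos (inv_pos.mpr hyn) (hy₁ b hb)
    · intro b hb
      rw [real_inner_smul_right]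
      exact mul_neg_of_pos_of_neg (inv_pos.mpr hyn) (hy₂ b hb)
  have hne : E.Nonempty := by
    refine ⟨‖w‖⁻¹ • w, hEmem w hw0 ?_ ?_⟩
    · intro b hb
      rw [real_inner_comm, hwapp]
      exact hh₁ b hb
    · intro b hb
      rw [real_inner_comm, hwapp]
      exact hh₂ b hb
  refine ⟨hne, ?_, ?_⟩
  · refine ⟨{u | (∀ b ∈ B₁, (0:ℝ) < inner ℝ b u) ∧ (∀ b ∈ B₂, (inner ℝ b u : ℝ) < 0)}, ?_, ?_⟩
    · rw [Metric.isOpen_iff]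
      rintro u ⟨hu₁, hu₂⟩
      have hcont : Continuous fun b : EuclideanSpace ℝ (Fin n) => (inner ℝ b u : ℝ) :=
        continuous_id.inner continuous_const
      obtain ⟨b₁, hb₁, hb₁min⟩ := hB₁c.exists_isMinOn hne₁ hcont.continuousOn
      obtain ⟨b₂, hb₂, hb₂max⟩ := hB₂c.exists_isMaxOn hne₂ hcont.continuousOn
      have hδ₁pos : (0:ℝ) < inner ℝ b₁ u := hu₁ b₁ hb₁
      have hδ₂pos : (inner ℝ b₂ u : ℝ) < 0 := hu₂ b₂ hb₂
      refine ⟨min (inner ℝ b₁ u) (-(inner ℝ b₂ u)), lt_min hδ₁pos (by linarith), ?_⟩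
      intro v hv
      rw [Metric.mem_ball, dist_eq_norm] at hv
      have hv1 : ‖v - u‖ < (inner ℝ b₁ u : ℝ) := lt_of_lt_of_le hv (min_le_left _ _)
      have hv2 : ‖v - u‖ < -(inner ℝ b₂ u : ℝ) := lt_of_lt_of_le hv (min_le_right _ _)
      constructor
      · intro b hb
        have hbn : ‖b‖ = 1 := by simpa using hB₁ hb
        have h1 : (inner ℝ b₁ u : ℝ) ≤ inner ℝ b u := hb₁min hb
        have h2 : |(inner ℝ b (v - u) : ℝ)| ≤ ‖v - u‖ := by
          have := abs_real_inner_le_norm b (v - u)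
          rwa [hbn, one_mul] at this
        have h3 : (inner ℝ b v : ℝ) = inner ℝ b u + inner ℝ b (v - u) := by
          rw [← inner_add_right]
          norm_num
        rw [h3]
        have := abs_le.mp h2
        linarith
      · intro b hb
        have hbn : ‖b‖ = 1 := by simpa using hB₂ hb
        have h1 : (inner ℝ b u : ℝ) ≤ inner ℝ b₂ u := hb₂max hb
        have h2 : |(inner ℝ b (v - u) : ℝ)| ≤ ‖v - u‖ := by
          have := abs_real_inner_le_norm b (v - u)
          rwa [hbn, one_mul] at this
        have h3 : (inner ℝ b v : ℝ) = inner ℝ b u + inner ℝ b (v - u) := by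
          rw [← inner_add_right]
          norm_num
        rw [h3]
        have := abs_le.mp h2
        linarith
    · ext u
      rw [hE]
      constructor
      · rintro ⟨hs, h1, h2⟩
        exact ⟨⟨h1, h2⟩, hs⟩
      · rintro ⟨⟨h1, h2⟩, hs⟩
        exact ⟨hs, h1, h2⟩
  · rintro x ⟨t₁, ht₁, u₁, hu₁, rfl⟩ y ⟨t₂, ht₂, u₂, hu₂, rfl⟩ a b ha hb hab
    rw [hE] at hu₁ hu₂
    obtain ⟨hu₁s, hu₁₁, hu₁₂⟩ := hu₁
    obtain ⟨hu₂s, hu₂₁, hu₂₂⟩ := hu₂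
    set z := a • t₁ • u₁ + b • t₂ • u₂ with hz
    have hab' : 0 < a ∨ 0 < b := by
      rcases eq_or_lt_of_le ha with h | h
      · right; linarith
      · left; exact h
    have key₁ : ∀ c ∈ B₁, (0:ℝ) < inner ℝ c z := by
      intro c hc
      have e : (inner ℝ c z : ℝ) = a * (t₁ * inner ℝ c u₁) + b * (t₂ * inner ℝ c u₂) := by
        simp only [hz, inner_add_right, real_inner_smul_right]
        try ring
      rw [e]
      have p1 : 0 ≤ a * (t₁ * (inner ℝ c u₁ : ℝ)) :=
        mul_nonneg ha (le_of_lt (mul_pos ht₁ (hu₁₁ c hc)))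
      have p2 : 0 ≤ b * (t₂ * (inner ℝ c u₂ : ℝ)) :=
        mul_nonneg hb (le_of_lt (mul_pos ht₂ (hu₂₁ c hc)))
      rcases hab' with h | h
      · have : 0 < a * (t₁ * (inner ℝ c u₁ : ℝ)) := mul_pos h (mul_pos ht₁ (hu₁₁ c hc))
        linarith
      · have : 0 < b * (t₂ * (inner ℝ c u₂ : ℝ)) := mul_pos h (mul_pos ht₂ (hu₂₁ c hc))
        linarith
    have key₂ : ∀ c ∈ B₂, (inner ℝ c z : ℝ) < 0 := by
      intro c hc
      have e : (inner ℝ c z : ℝ) = a * (t₁ * inner ℝ c u₁) + b * (t₂ * inner ℝ c u₂) := by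
        simp only [hz, inner_add_right, real_inner_smul_right]
        try ring
      rw [e]
      have p1 : a * (t₁ * (inner ℝ c u₁ : ℝ)) ≤ 0 :=
        mul_nonpos_of_nonneg_of_nonpos ha (le_of_lt (mul_neg_of_pos_of_neg ht₁ (hu₁₂ c hc)))
      have p2 : b * (t₂ * (inner ℝ c u₂ : ℝ)) ≤ 0 :=
        mul_nonpos_of_nonneg_of_nonpos hb (le_of_lt (mul_neg_of_pos_of_neg ht₂ (hu₂₂ c hc)))
      rcases hab' with h | h
      · have : a * (t₁ * (inner ℝ c u₁ : ℝ)) < 0 :=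
          mul_neg_of_pos_of_neg h (mul_neg_of_pos_of_neg ht₁ (hu₁₂ c hc))
        linarith
      · have : b * (t₂ * (inner ℝ c u₂ : ℝ)) < 0 :=
          mul_neg_of_pos_of_neg h (mul_neg_of_pos_of_neg ht₂ (hu₂₂ c hc))
        linarith
    have hz0 : z ≠ 0 := by
      obtain ⟨c, hc⟩ := hne₁
      intro h0
      have := key₁ c hc
      rw [h0] at this
      simp at this
    have hzn : (0:ℝ) < ‖z‖ := norm_pos_iff.mpr hz0
    refine ⟨‖z‖, hzn, ‖z‖⁻¹ • z, hEmem z hz0 key₁ key₂, ?_⟩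
    rw [smul_smul, mul_inv_cancel₀ (ne_of_gt hzn), one_smul]
end
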